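/- Let X and Y be two strings of length m over an alphabet Σ, and let Q be a nonempty finite set of primes such that the product of the primes in Q is greater than m. Then the Hamming distance between X and Y equals 1 if and only if for every q ∈ Q there is exactly one residue j ∈ {0,…,q−1} such that the q-spaced subsequence of X at residue j differs from the q-spaced subsequence of Y at residue j. -/

import Mathlib

/-- The `q`-spaced subsequence of a list `W` at residue `j`: the sublist of
symbols of `W` at 0-indexed positions congruent to `j` modulo `q`, taken in
increasing order of position. -/
def spaced {α : Type*} (W : List α) (q j : ℕ) : List α :=
  ((W.zipIdx.filter fun p => p.2 % q = j).map Prod.fst)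

lemma enum_finRange (m : ℕ) :
    (List.finRange m).zipIdx = (List.finRange m).map (fun (i : Fin m) => (i, (i : ℕ))) := by
  apply List.ext_getElem <;> simp [List.getElem_zipIdx]
lemma spaced_ofFn {α} (m : ℕ) (X : Fin m → α) (q j : ℕ) :
    spaced (List.ofFn X) q j
      = ((List.finRange m).filter (fun (i : Fin m) => decide ((i:ℕ) % q = j))).map X := by
  rw [spaced, List.ofFn_eq_map, List.zipIdx_map, enum_finRange]
  simp [List.filter_map, Function.comp_def, List.map_map]
lemma map_eq_map_iff {α β} (l : List α) (f g : α → β) : l.map f = l.map g ↔ ∀ x ∈ l, f x = g x := by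
  induction l with
  | nil => simp
  | cons a t ih => simp [ih]
lemma spaced_ne_iff {α} (m : ℕ) (X Y : Fin m → α) (q j : ℕ) :
    spaced (List.ofFn X) q j ≠ spaced (List.ofFn Y) q j ↔
      ∃ i : Fin m, (i:ℕ) % q = j ∧ X i ≠ Y i := by
  rw [spaced_ofFn, spaced_ofFn, Ne, map_eq_map_iff]
  simp [List.mem_filter]

theorem one_mismatch_iff_unique_residue_per_prime
    {A : Type*} [DecidableEq A] (m : ℕ) (X Y : Fin m → A)
    (Q : Finset ℕ) (hQne : Q.Nonempty) (hQprime : ∀ q ∈ Q, q.Prime)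
    (hprod : m < ∏ q ∈ Q, q) :
    hammingDist X Y = 1 ↔
      ∀ q ∈ Q, ∃! j : ℕ, j < q ∧
        spaced (List.ofFn X) q j ≠ spaced (List.ofFn Y) q j := by
  have hspaced := spaced_ne_iff m X Y
  rw [hammingDist, Finset.card_eq_one]
  constructor
  · rintro ⟨a, ha⟩ q hq
    have hamem : X a ≠ Y a := by
      have h := ha ▸ Finset.mem_singleton_self a
      simpa using h
    have hq0 : 0 < q := (hQprime q hq).pos
    refine ⟨(a:ℕ) % q, ⟨Nat.mod_lt _ hq0, (hspaced q _).mpr ⟨a, rfl, hamem⟩⟩, ?_⟩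
    rintro j ⟨hj, hne⟩
    obtain ⟨i, hij, hXY⟩ := (hspaced q j).mp hne
    have hi : i ∈ ({a} : Finset (Fin m)) := by
      rw [← ha]; simp [hXY]
    rw [Finset.mem_singleton] at hi
    subst hi; exact hij.symm
  · intro h
    obtain ⟨q0, hq0⟩ := hQne
    obtain ⟨j0, ⟨⟨_, hne0⟩, _⟩⟩ := h q0 hq0
    obtain ⟨a, _, haXY⟩ := (hspaced q0 j0).mp hne0
    refine ⟨a, ?_⟩
    rw [Finset.eq_singleton_iff_unique_mem]
    refine ⟨by simp [haXY], ?_⟩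
    intro b hb
    have hbXY : X b ≠ Y b := by simpa using hb
    have hmod : ∀ q ∈ Q, (a:ℕ) % q = (b:ℕ) % q := by
      intro q hq
      have hq0' : 0 < q := (hQprime q hq).pos
      obtain ⟨j, _, huniq⟩ := h q hq
      have h1 := huniq ((a:ℕ) % q) ⟨Nat.mod_lt _ hq0', (hspaced q _).mpr ⟨a, rfl, haXY⟩⟩
      have h2 := huniq ((b:ℕ) % q) ⟨Nat.mod_lt _ hq0', (hspaced q _).mpr ⟨b, rfl, hbXY⟩⟩
      rw [h1, h2]
    have hdvd : ∀ q ∈ Q, q ∣ ((a:ℤ) - (b:ℤ)).natAbs := by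
      intro q hq
      have hmq : ((a:ℕ) : ℤ) % (q:ℤ) = ((b:ℕ) : ℤ) % (q:ℤ) := by
        exact_mod_cast congrArg (Nat.cast : ℕ → ℤ) (hmod q hq)
      have hd : (q:ℤ) ∣ (a:ℤ) - (b:ℤ) := (Int.ModEq.symm hmq).dvd
      have := Int.natAbs_dvd_natAbs.mpr hd
      simpa using this
    have hP : (∏ q ∈ Q, q) ∣ ((a:ℤ) - (b:ℤ)).natAbs :=
      Finset.prod_primes_dvd _ (fun q hq => (hQprime q hq).prime) hdvd
    have hlt : ((a:ℤ) - (b:ℤ)).natAbs < ∏ q ∈ Q, q := by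
      have ha' := a.isLt; have hb' := b.isLt
      omega
    have hz : ((a:ℤ) - (b:ℤ)).natAbs = 0 := Nat.eq_zero_of_dvd_of_lt hP hlt
    have : (b:ℕ) = a := by omega
    exact Fin.ext this
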